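/- For every n ∈ ℕ, the polynomial Φ^reg_n(x) := Π_{k ∈ Reg_n} (x − exp(2πik/n)) satisfies Φ^reg_n(x) = Π_{d || n} Φ_d(x), where Φ_d is the d-th cyclotomic polynomial and the product on the right runs over the unitary divisors d of n. In particular, the degree of Φ^reg_n is ρ(n). -/

import Mathlib

open Finset Polynomial
open scoped Classical

/-- `k` is regular (mod `n`): there is an integer `x` with `k² x ≡ k (mod n)`. -/
def IsRegularMod (k n : ℕ) : Prop := ∃ x : ℤ, (n : ℤ) ∣ (k : ℤ) ^ 2 * x - (k : ℤ)

/-- `Reg_n`, the set of `k ∈ {1,…,n}` that are regular (mod `n`). -/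
noncomputable def Reg (n : ℕ) : Finset ℕ :=
  (Finset.Icc 1 n).filter fun k => IsRegularMod k n

/-- The unitary divisors of `n`: divisors `d` of `n` with `gcd(d, n/d) = 1`. -/
def unitaryDivisors (n : ℕ) : Finset ℕ := n.divisors.filter fun d => Nat.Coprime d (n / d)

/-- The analogue `Φ^reg_n(x) = ∏_{k ∈ Reg_n} (x − exp(2πik/n))` of the
cyclotomic polynomial. -/
noncomputable def cyclotomicReg (n : ℕ) : Polynomial ℂ :=
  ∏ k ∈ Reg n, (X - C (Complex.exp (2 * Real.pi * Complex.I * k / n)))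

lemma isRegularMod_iff_gcd_sq_dvd (k n : ℕ) :
    IsRegularMod k n ↔ Nat.gcd (k ^ 2) n ∣ k := by
  constructor
  · rintro ⟨x, c, hc⟩
    have d1 : ((Nat.gcd (k ^ 2) n : ℤ)) ∣ (k : ℤ) ^ 2 := by
      have := Int.natCast_dvd_natCast.2 (Nat.gcd_dvd_left (k ^ 2) n)
      push_cast at this; exact this
    have d2 : ((Nat.gcd (k ^ 2) n : ℤ)) ∣ (n : ℤ) :=
      Int.natCast_dvd_natCast.2 (Nat.gcd_dvd_right (k ^ 2) n)
    have h1 : ((Nat.gcd (k ^ 2) n : ℤ)) ∣ (k : ℤ) := by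
      have : (k : ℤ) = k ^ 2 * x - (k ^ 2 * x - k) := by ring
      rw [this, hc]
      exact dvd_sub (d1.mul_right x) (d2.mul_right c)
    exact_mod_cast h1
  · rintro ⟨c, hc⟩
    refine ⟨Nat.gcdA (k ^ 2) n * c, -(Nat.gcdB (k ^ 2) n * c), ?_⟩
    have hg : ((Nat.gcd (k ^ 2) n : ℤ)) =
        (k ^ 2 : ℕ) * Nat.gcdA (k ^ 2) n + n * Nat.gcdB (k ^ 2) n :=
      Nat.gcd_eq_gcd_ab _ _
    have hk : (k : ℤ) = (Nat.gcd (k ^ 2) n : ℤ) * c := by exact_mod_cast hc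
    push_cast at hg hk ⊢
    linear_combination -hk - (c : ℤ) * hg

lemma gcd_sq_dvd_iff_coprime {k n : ℕ} (hk : 1 ≤ k) (hn : 1 ≤ n) :
    Nat.gcd (k ^ 2) n ∣ k ↔ Nat.Coprime (Nat.gcd k n) (n / Nat.gcd k n) := by
  set g := Nat.gcd k n with hgdef
  have hg0 : 0 < g := Nat.gcd_pos_of_pos_left n hk
  have hgn : g ∣ n := Nat.gcd_dvd_right k n
  have hgk : g ∣ k := Nat.gcd_dvd_left k n
  have hgk2 : g ∣ k ^ 2 := dvd_pow hgk two_ne_zero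
  constructor
  · intro h
    by_contra hcon
    obtain ⟨p, hp, hpg, hpd⟩ := Nat.Prime.not_coprime_iff_dvd.1 hcon
    have hge : Nat.gcd (k ^ 2) n = g :=
      Nat.dvd_antisymm (Nat.dvd_gcd h (Nat.gcd_dvd_right _ _))
        (Nat.dvd_gcd hgk2 hgn)
    set a := g.factorization p with hadef
    have ha : 0 < a := hp.factorization_pos_of_dvd hg0.ne' hpg
    have hpa : p ^ a ∣ g := Nat.ordProj_dvd g p
    have h1 : p ^ (a + 1) ∣ k ^ 2 := by
      have hpk : p ^ a ∣ k := hpa.trans hgk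
      calc p ^ (a + 1) ∣ p ^ (a + a) := pow_dvd_pow p (by omega)
        _ = p ^ a * p ^ a := by rw [pow_add]
        _ ∣ k * k := mul_dvd_mul hpk hpk
        _ = k ^ 2 := (sq k).symm
    have h2 : p ^ (a + 1) ∣ n := by
      have hn' : g * (n / g) = n := Nat.mul_div_cancel' hgn
      calc p ^ (a + 1) = p ^ a * p := pow_succ p a
        _ ∣ g * (n / g) := mul_dvd_mul hpa hpd
        _ = n := hn'
    have h3 : p ^ (a + 1) ∣ g := hge ▸ Nat.dvd_gcd h1 h2
    have := (hp.pow_dvd_iff_le_factorization hg0.ne').1 h3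
    omega
  · intro hcop
    have hdivg : n / g ∣ n := Nat.div_dvd_of_dvd hgn
    have h1 : Nat.Coprime k (n / g) := by
      have d1 : Nat.gcd k (n / g) ∣ g :=
        Nat.dvd_gcd (Nat.gcd_dvd_left _ _) ((Nat.gcd_dvd_right _ _).trans hdivg)
      have d2 : Nat.gcd k (n / g) ∣ Nat.gcd g (n / g) :=
        Nat.dvd_gcd d1 (Nat.gcd_dvd_right _ _)
      exact Nat.dvd_one.1 (hcop ▸ d2)
    have h2 : Nat.Coprime (k ^ 2) (n / g) := h1.pow_left 2
    have hcd : Nat.Coprime (Nat.gcd (k ^ 2) n) (n / g) :=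
      Nat.Coprime.coprime_dvd_left (Nat.gcd_dvd_left _ _) h2
    have hmul : Nat.gcd (k ^ 2) n ∣ g * (n / g) := by
      rw [Nat.mul_div_cancel' hgn]; exact Nat.gcd_dvd_right _ _
    exact (Nat.Coprime.dvd_of_dvd_mul_right hcd hmul).trans hgk

lemma mem_Reg_iff {k n : ℕ} (hn : 1 ≤ n) :
    k ∈ Reg n ↔ (1 ≤ k ∧ k ≤ n) ∧ Nat.Coprime (Nat.gcd k n) (n / Nat.gcd k n) := by
  simp only [Reg, Finset.mem_filter, Finset.mem_Icc]
  constructor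
  · rintro ⟨⟨h1, h2⟩, hreg⟩
    exact ⟨⟨h1, h2⟩, (gcd_sq_dvd_iff_coprime h1 hn).1 ((isRegularMod_iff_gcd_sq_dvd k n).1 hreg)⟩
  · rintro ⟨⟨h1, h2⟩, hcop⟩
    exact ⟨⟨h1, h2⟩, (isRegularMod_iff_gcd_sq_dvd k n).2 ((gcd_sq_dvd_iff_coprime h1 hn).2 hcop)⟩

theorem cyclotomicReg_eq_prod (n : ℕ) (hn : 1 ≤ n) :
    cyclotomicReg n = ∏ d ∈ unitaryDivisors n, Polynomial.cyclotomic d ℂ ∧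
    (cyclotomicReg n).natDegree = (Reg n).card := by
  have hn0 : n ≠ 0 := by omega
  have hn0' : 0 < n := hn
  set ζ : ℂ := Complex.exp (2 * Real.pi * Complex.I / n) with hζdef
  have hζ : IsPrimitiveRoot ζ n := Complex.isPrimitiveRoot_exp n hn0
  have hexp : ∀ k : ℕ, Complex.exp (2 * Real.pi * Complex.I * k / n) = ζ ^ k := by
    intro k
    rw [hζdef, ← Complex.exp_nat_mul]
    congr 1
    field_simp
  -- injectivity helper
  have key : ∀ k, 1 ≤ k → k ≤ n → ∀ k', 1 ≤ k' → k' ≤ n → ζ ^ k = ζ ^ k' → k = k' := by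
    intro k hk1 hkn k' hk1' hkn' he
    have t : ∀ m : ℕ, ζ ^ m = ζ ^ (m % n) := by
      intro m
      conv_lhs => rw [← Nat.div_add_mod m n]
      rw [pow_add, pow_mul, hζ.pow_eq_one, one_pow, one_mul]
    have hmod : k % n = k' % n := by
      refine hζ.pow_inj (Nat.mod_lt _ hn0') (Nat.mod_lt _ hn0') ?_
      rw [← t, ← t, he]
    rcases Nat.lt_or_ge k n with h | h
    · rw [Nat.mod_eq_of_lt h] at hmod
      rcases Nat.lt_or_ge k' n with h' | h'
      · rwa [Nat.mod_eq_of_lt h'] at hmod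
      · have hk' : k' = n := le_antisymm hkn' h'
        rw [hk', Nat.mod_self] at hmod
        omega
    · have hk : k = n := le_antisymm hkn h
      rw [hk, Nat.mod_self] at hmod
      rcases Nat.lt_or_ge k' n with h' | h'
      · rw [Nat.mod_eq_of_lt h'] at hmod; omega
      · have hk' : k' = n := le_antisymm hkn' h'
        omega
  have hprod : cyclotomicReg n = ∏ d ∈ unitaryDivisors n, Polynomial.cyclotomic d ℂ := by
    rw [cyclotomicReg]
    have hmaps : ∀ k ∈ Reg n, n / Nat.gcd k n ∈ unitaryDivisors n := by
      intro k hk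
      rw [mem_Reg_iff hn] at hk
      obtain ⟨⟨hk1, hkn⟩, hcop⟩ := hk
      have hgn : Nat.gcd k n ∣ n := Nat.gcd_dvd_right k n
      have hg0 : 0 < Nat.gcd k n := Nat.gcd_pos_of_pos_left n hk1
      simp only [unitaryDivisors, Finset.mem_filter, Nat.mem_divisors]
      refine ⟨⟨Nat.div_dvd_of_dvd hgn, hn0⟩, ?_⟩
      rw [Nat.div_div_self hgn hn0]
      exact hcop.symm
    rw [← Finset.prod_fiberwise_of_maps_to hmaps]
    refine Finset.prod_congr rfl fun d hd => ?_
    simp only [unitaryDivisors, Finset.mem_filter, Nat.mem_divisors] at hd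
    obtain ⟨⟨hdn, -⟩, hdcop⟩ := hd
    have hd0 : 0 < d := Nat.pos_of_dvd_of_pos hdn hn0'
    set g : ℕ := n / d with hgdef
    have hgd : g * d = n := Nat.div_mul_cancel hdn
    have hg0 : 0 < g := by
      rcases Nat.eq_zero_or_pos g with h | h
      · rw [h, zero_mul] at hgd; omega
      · exact h
    have hng : n / g = d := by rw [← hgd, Nat.mul_div_cancel_left d hg0]
    have hη : IsPrimitiveRoot (ζ ^ g) d := hζ.pow hn0' (by rw [← hgd])
    rw [cyclotomic_eq_prod_X_sub_primitiveRoots hη]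
    refine Finset.prod_bij
      (fun k _ => Complex.exp (2 * Real.pi * Complex.I * k / n)) ?_ ?_ ?_ ?_
    · -- maps to primitiveRoots d ℂ
      intro k hk
      simp only [Finset.mem_filter] at hk
      obtain ⟨hkreg, hkfib⟩ := hk
      rw [mem_Reg_iff hn] at hkreg
      obtain ⟨⟨hk1, hkn⟩, -⟩ := hkreg
      have hgcd0 : 0 < Nat.gcd k n := Nat.gcd_pos_of_pos_left n hk1
      have hgcdn : Nat.gcd k n ∣ n := Nat.gcd_dvd_right k n
      have hgcdeq : Nat.gcd k n = g := by
        rw [hgdef, ← hkfib, Nat.div_div_self hgcdn hn0]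
      simp only [hexp]
      rw [mem_primitiveRoots hd0]
      have hkk : k = Nat.gcd k n * (k / Nat.gcd k n) :=
        (Nat.mul_div_cancel' (Nat.gcd_dvd_left k n)).symm
      have hcopkd : Nat.Coprime (k / Nat.gcd k n) d := by
        have := Nat.coprime_div_gcd_div_gcd (m := k) (n := n) hgcd0
        rwa [hkfib] at this
      have : ζ ^ k = (ζ ^ g) ^ (k / Nat.gcd k n) := by
        conv_lhs => rw [hkk, hgcdeq, pow_mul]
        rw [hgcdeq]
      rw [this]
      exact hη.pow_of_coprime _ hcopkd
    · -- injective
      intro k hk k' hk' heq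
      simp only [Finset.mem_filter] at hk hk'
      rw [mem_Reg_iff hn] at hk hk'
      obtain ⟨⟨⟨hk1, hkn⟩, -⟩, -⟩ := hk
      obtain ⟨⟨⟨hk1', hkn'⟩, -⟩, -⟩ := hk'
      simp only [hexp] at heq
      exact key k hk1 hkn k' hk1' hkn' heq
    · -- surjective
      intro μ hμ
      have hμp : IsPrimitiveRoot μ d := (mem_primitiveRoots hd0).1 hμ
      haveI : NeZero d := ⟨hd0.ne'⟩
      obtain ⟨j, hjd, hj⟩ := hη.eq_pow_of_pow_eq_one hμp.pow_eq_one
      have hjcop : Nat.Coprime j d := by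
        have : IsPrimitiveRoot ((ζ ^ g) ^ j) d := hj ▸ hμp
        exact (hη.pow_iff_coprime hd0 j).1 this
      set j' : ℕ := if j = 0 then d else j with hj'def
      have hj'1 : 1 ≤ j' := by
        rw [hj'def]; split <;> omega
      have hj'd : j' ≤ d := by
        rw [hj'def]; split <;> omega
      have hj'cop : Nat.Coprime j' d := by
        rw [hj'def]; split
        · next h =>
          subst h
          have : d = 1 := by simpa [Nat.Coprime] using hjcop
          simp [this]
        · exact hjcop
      have hj'val : (ζ ^ g) ^ j' = μ := by
        rw [hj'def]; split
        · next h => subst h; rw [hη.pow_eq_one, ← hj, pow_zero]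
        · exact hj
      refine ⟨j' * g, ?_, ?_⟩
      · have hgcd : Nat.gcd (j' * g) n = g := by
          rw [← hgd, mul_comm g d, Nat.gcd_mul_right, hj'cop, one_mul]
        have hmem : j' * g ∈ Reg n := by
          rw [mem_Reg_iff hn]
          refine ⟨⟨Nat.one_le_iff_ne_zero.2 (by positivity), ?_⟩, ?_⟩
          · calc j' * g ≤ d * g := Nat.mul_le_mul_right g hj'd
              _ = n := by rw [mul_comm]; exact hgd
          · rw [hgcd, hng]
            exact hdcop.symm
        simp only [Finset.mem_filter]
        exact ⟨hmem, by rw [hgcd, hng]⟩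
      · simp only [hexp]
        rw [mul_comm j' g, pow_mul, hj'val]
    · -- value agreement
      intro k hk
      rfl
  refine ⟨hprod, ?_⟩
  rw [cyclotomicReg, Polynomial.natDegree_prod_of_monic _ _ fun k _ => monic_X_sub_C _]
  simp [Polynomial.natDegree_X_sub_C]
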